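/- There exist δ > 0 and C > 0 such that for all r ∈ ℝ and all s with 0 < s − r < δ, writing δ₀ := s − r and evaluating k and its derivatives at r, one has |γ'(r) ∧ γ'(s) − [k δ₀ + (k'/2) δ₀² + ((k'' − k³)/6) δ₀³ + ((k''' − 6k²k')/24) δ₀⁴ + ((k⁵ − 10k²k'' − 15k k'² + k⁽⁴⁾)/120) δ₀⁵]| ≤ C δ₀⁶. -/

import Mathlib

open Set

noncomputable section

/-- Planar cross product (wedge) of two vectors in `ℝ × ℝ`. -/
def wedge (u v : ℝ × ℝ) : ℝ := u.1 * v.2 - u.2 * v.1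

/-- Euclidean dot product in `ℝ × ℝ`. -/
def dotp (u v : ℝ × ℝ) : ℝ := u.1 * v.1 + u.2 * v.2

/-- Rotation of `ℝ²` by `+π/2`. -/
def Jmap (u : ℝ × ℝ) : ℝ × ℝ := (-u.2, u.1)

lemma smooth_iteratedDeriv {f : ℝ → ℝ} (hf : ContDiff ℝ (⊤ : ℕ∞) f) (n : ℕ) :
    ContDiff ℝ (⊤ : ℕ∞) (iteratedDeriv n f) := by
  rw [iteratedDeriv_eq_iterate]; exact ContDiff.iterate_deriv n hf

lemma hasDerivAt_iteratedDeriv {f : ℝ → ℝ} (hf : ContDiff ℝ (⊤ : ℕ∞) f) (n : ℕ) (t : ℝ) :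
    HasDerivAt (iteratedDeriv n f) (iteratedDeriv (n + 1) f t) t := by
  rw [iteratedDeriv_succ]
  exact ((smooth_iteratedDeriv hf n).differentiable (by simp) t).hasDerivAt

lemma iteratedDerivWithin_eq_iteratedDeriv' {f : ℝ → ℝ} (hf : ContDiff ℝ (⊤ : ℕ∞) f)
    {s : Set ℝ} (hs : UniqueDiffOn ℝ s) (n : ℕ) :
    ∀ x ∈ s, iteratedDerivWithin n f s x = iteratedDeriv n f x := by
  induction n with
  | zero => intro x hx; simp
  | succ n ih =>
      intro x hx
      rw [iteratedDerivWithin_succ, iteratedDeriv_succ]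
      rw [derivWithin_congr ih (ih x hx)]
      exact ((smooth_iteratedDeriv hf n).differentiable
        (by simp) x).derivWithin (hs.uniqueDiffWithinAt hx)

lemma periodic_deriv' {f : ℝ → ℝ} {c : ℝ} (h : Function.Periodic f c) :
    Function.Periodic (deriv f) c := by
  intro x
  rw [← deriv_comp_add_const]
  congr 1
  ext y
  exact h y

lemma periodic_bound {f : ℝ → ℝ} {c : ℝ} (hc : 0 < c) (h : Function.Periodic f c)
    (hf : Continuous f) : ∃ M : ℝ, 0 ≤ M ∧ ∀ x, |f x| ≤ M := by
  obtain ⟨M, hM⟩ := (isCompact_Icc (a := 0) (b := c)).exists_bound_of_continuousOn hf.continuousOn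
  refine ⟨M, le_trans (abs_nonneg _) (hM 0 (by constructor <;> [rfl; exact hc.le])), fun x => ?_⟩
  obtain ⟨y, hy, hxy⟩ := h.exists_mem_Ico₀ hc x
  rw [hxy]
  exact hM y ⟨hy.1, hy.2.le⟩

lemma iteratedDeriv_prod {γ : ℝ → ℝ × ℝ} (hγ : ContDiff ℝ (⊤ : ℕ∞) γ) (n : ℕ) (s : ℝ) :
    iteratedDeriv n γ s =
      (iteratedDeriv n (fun t => (γ t).1) s, iteratedDeriv n (fun t => (γ t).2) s) := by
  induction n generalizing s with
  | zero => simp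
  | succ n ih =>
      rw [iteratedDeriv_succ]
      have h1 : iteratedDeriv n γ = fun t =>
          ((iteratedDeriv n (fun u => (γ u).1) t, iteratedDeriv n (fun u => (γ u).2) t) : ℝ × ℝ) :=
        funext fun t => ih t
      rw [h1]
      exact ((hasDerivAt_iteratedDeriv hγ.fst n s).prodMk (hasDerivAt_iteratedDeriv hγ.snd n s)).deriv

/-- Taylor expansion of the denominator `γ'(r) ∧ γ'(s)` of the outer length billiard
generating function, with `δ₀ = s - r` and curvature derivatives at `r`. -/
theorem denominator_taylor_expansion
    (ℓ : ℝ) (hℓ : 0 < ℓ) (γ : ℝ → ℝ × ℝ) (k : ℝ → ℝ)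
    (hγ : ContDiff ℝ (⊤ : ℕ∞) γ) (hper : ∀ s, γ (s + ℓ) = γ s)
    (hunit : ∀ s, dotp (deriv γ s) (deriv γ s) = 1)
    (hkdef : ∀ s, k s = dotp (iteratedDeriv 2 γ s) (Jmap (deriv γ s)))
    (hkpos : ∀ s, 0 < k s) :
    ∃ δ > (0:ℝ), ∃ C > (0:ℝ), ∀ r s : ℝ, 0 < s - r → s - r < δ →
      |wedge (deriv γ r) (deriv γ s) -
        (k r * (s - r) + deriv k r / 2 * (s - r) ^ 2 +
          (iteratedDeriv 2 k r - (k r) ^ 3) / 6 * (s - r) ^ 3 +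
          (iteratedDeriv 3 k r - 6 * (k r) ^ 2 * deriv k r) / 24 * (s - r) ^ 4 +
          ((k r) ^ 5 - 10 * (k r) ^ 2 * iteratedDeriv 2 k r - 15 * k r * (deriv k r) ^ 2 +
            iteratedDeriv 4 k r) / 120 * (s - r) ^ 5)|
        ≤ C * (s - r) ^ 6 := by
  have hxC : ContDiff ℝ (⊤ : ℕ∞) fun t => (γ t).1 := hγ.fst
  have hyC : ContDiff ℝ (⊤ : ℕ∞) fun t => (γ t).2 := hγ.snd
  obtain ⟨X, hX⟩ : ∃ X : ℕ → ℝ → ℝ, X = fun n => iteratedDeriv n fun t => (γ t).1 := ⟨_, rfl⟩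
  obtain ⟨Y, hY⟩ : ∃ Y : ℕ → ℝ → ℝ, Y = fun n => iteratedDeriv n fun t => (γ t).2 := ⟨_, rfl⟩
  obtain ⟨K, hK⟩ : ∃ K : ℕ → ℝ → ℝ, K = fun n => iteratedDeriv n k := ⟨_, rfl⟩
  have hXd : ∀ (n : ℕ) (t : ℝ), HasDerivAt (X n) (X (n + 1) t) t := by
    simp only [hX]; exact fun n t => hasDerivAt_iteratedDeriv hxC n t
  have hYd : ∀ (n : ℕ) (t : ℝ), HasDerivAt (Y n) (Y (n + 1) t) t := by
    simp only [hY]; exact fun n t => hasDerivAt_iteratedDeriv hyC n t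
  have hXsm : ∀ n, ContDiff ℝ (⊤ : ℕ∞) (X n) := by
    simp only [hX]; exact fun n => smooth_iteratedDeriv hxC n
  have hYsm : ∀ n, ContDiff ℝ (⊤ : ℕ∞) (Y n) := by
    simp only [hY]; exact fun n => smooth_iteratedDeriv hyC n
  have hdγ : ∀ t, deriv γ t = (X 1 t, Y 1 t) := by
    intro t
    have h := iteratedDeriv_prod hγ 1 t
    rw [iteratedDeriv_one] at h
    rw [h, hX, hY]
  have hγ2 : ∀ t, iteratedDeriv 2 γ t = (X 2 t, Y 2 t) := by
    intro t; rw [iteratedDeriv_prod hγ 2 t, hX, hY]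
  have hunit' : ∀ t, X 1 t ^ 2 + Y 1 t ^ 2 = 1 := by
    intro t
    have h := hunit t
    rw [hdγ t] at h
    simp only [dotp] at h
    nlinarith [h]
  have hkk : ∀ t, k t = X 1 t * Y 2 t - Y 1 t * X 2 t := by
    intro t
    rw [hkdef t, hγ2 t, hdγ t]
    simp only [dotp, Jmap]
    ring
  have horth : ∀ t, X 1 t * X 2 t + Y 1 t * Y 2 t = 0 := by
    intro t
    have h1 : HasDerivAt (fun u => X 1 u ^ 2 + Y 1 u ^ 2)
        ((2 : ℕ) * X 1 t ^ (2 - 1) * X 2 t + (2 : ℕ) * Y 1 t ^ (2 - 1) * Y 2 t) t :=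
      ((hXd 1 t).pow 2).add ((hYd 1 t).pow 2)
    have h2 : (fun u => X 1 u ^ 2 + Y 1 u ^ 2) = fun _ => (1 : ℝ) := funext fun u => hunit' u
    have h3 := h1.deriv
    rw [h2, deriv_const] at h3
    have h4 : (0 : ℝ) = 2 * X 1 t * X 2 t + 2 * Y 1 t * Y 2 t := by
      rw [h3]; push_cast; ring
    linarith [h4]
  -- smoothness of k
  have hkC : ContDiff ℝ (⊤ : ℕ∞) k := by
    have h : k = fun t => X 1 t * Y 2 t - Y 1 t * X 2 t := funext hkk
    rw [h]
    exact ((hXsm 1).mul (hYsm 2)).sub ((hYsm 1).mul (hXsm 2))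
  have hKd : ∀ (n : ℕ) (t : ℝ), HasDerivAt (K n) (K (n + 1) t) t := by
    simp only [hK]; exact fun n t => hasDerivAt_iteratedDeriv hkC n t
  have hK0 : K 0 = k := by rw [hK]; exact iteratedDeriv_zero
  have hkd : ∀ t, HasDerivAt k (K 1 t) t := by
    intro t; have := hKd 0 t; rwa [hK0] at this
  -- frame identities
  have E2x : ∀ t, X 2 t = -(k t * Y 1 t) := by
    intro t
    linear_combination (-(X 2 t)) * hunit' t + X 1 t * horth t + Y 1 t * hkk t
  have E2y : ∀ t, Y 2 t = k t * X 1 t := by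
    intro t
    linear_combination (-(Y 2 t)) * hunit' t + Y 1 t * horth t - X 1 t * hkk t
  have E3x : ∀ t, X 3 t = -(K 1 t * Y 1 t) - k t ^ 2 * X 1 t := by
    intro t
    have hd : HasDerivAt (X 2) (-(K 1 t * Y 1 t + k t * Y 2 t)) t := by
      rw [show X 2 = fun u => -(k u * Y 1 u) from funext E2x]
      exact ((hkd t).mul (hYd 1 t)).neg
    have h := (hXd 2 t).unique hd
    rw [E2y t] at h
    rw [h]; ring
  have E3y : ∀ t, Y 3 t = K 1 t * X 1 t - k t ^ 2 * Y 1 t := by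
    intro t
    have hd : HasDerivAt (Y 2) (K 1 t * X 1 t + k t * X 2 t) t := by
      rw [show Y 2 = fun u => k u * X 1 u from funext E2y]
      exact (hkd t).mul (hXd 1 t)
    have h := (hYd 2 t).unique hd
    rw [E2x t] at h
    rw [h]; ring
  have E4x : ∀ t, X 4 t = (k t ^ 3 - K 2 t) * Y 1 t - 3 * k t * K 1 t * X 1 t := by
    intro t
    have hd : HasDerivAt (X 3)
        (-(K 2 t * Y 1 t + K 1 t * Y 2 t) -
          (((2 : ℕ) * k t ^ (2 - 1) * K 1 t) * X 1 t + k t ^ 2 * X 2 t)) t := by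
      rw [show X 3 = fun u => -(K 1 u * Y 1 u) - k u ^ 2 * X 1 u from funext E3x]
      exact (((hKd 1 t).mul (hYd 1 t)).neg).sub (((hkd t).pow 2).mul (hXd 1 t))
    have h := (hXd 3 t).unique hd
    rw [E2x t, E2y t] at h
    rw [h]; push_cast; ring
  have E4y : ∀ t, Y 4 t = (K 2 t - k t ^ 3) * X 1 t - 3 * k t * K 1 t * Y 1 t := by
    intro t
    have hd : HasDerivAt (Y 3)
        ((K 2 t * X 1 t + K 1 t * X 2 t) -
          (((2 : ℕ) * k t ^ (2 - 1) * K 1 t) * Y 1 t + k t ^ 2 * Y 2 t)) t := by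
      rw [show Y 3 = fun u => K 1 u * X 1 u - k u ^ 2 * Y 1 u from funext E3y]
      exact ((hKd 1 t).mul (hXd 1 t)).sub (((hkd t).pow 2).mul (hYd 1 t))
    have h := (hYd 3 t).unique hd
    rw [E2x t, E2y t] at h
    rw [h]; push_cast; ring
  have E5x : ∀ t, X 5 t =
      (k t ^ 4 - 3 * K 1 t ^ 2 - 4 * k t * K 2 t) * X 1 t -
        (K 3 t - 6 * k t ^ 2 * K 1 t) * Y 1 t := by
    intro t
    have hd : HasDerivAt (X 4)
        ((((3 : ℕ) * k t ^ (3 - 1) * K 1 t - K 3 t) * Y 1 t + (k t ^ 3 - K 2 t) * Y 2 t) -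
          (((3 * K 1 t) * K 1 t + (3 * k t) * K 2 t) * X 1 t + (3 * k t * K 1 t) * X 2 t)) t := by
      rw [show X 4 = fun u => (k u ^ 3 - K 2 u) * Y 1 u - 3 * k u * K 1 u * X 1 u
        from funext E4x]
      exact ((((hkd t).pow 3).sub (hKd 2 t)).mul (hYd 1 t)).sub
        ((((hkd t).const_mul (3:ℝ)).mul (hKd 1 t)).mul (hXd 1 t))
    have h := (hXd 4 t).unique hd
    rw [E2x t, E2y t] at h
    rw [h]; push_cast; ring
  have E5y : ∀ t, Y 5 t =
      (K 3 t - 6 * k t ^ 2 * K 1 t) * X 1 t +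
        (k t ^ 4 - 3 * K 1 t ^ 2 - 4 * k t * K 2 t) * Y 1 t := by
    intro t
    have hd : HasDerivAt (Y 4)
        (((K 3 t - (3 : ℕ) * k t ^ (3 - 1) * K 1 t) * X 1 t + (K 2 t - k t ^ 3) * X 2 t) -
          (((3 * K 1 t) * K 1 t + (3 * k t) * K 2 t) * Y 1 t + (3 * k t * K 1 t) * Y 2 t)) t := by
      rw [show Y 4 = fun u => (K 2 u - k u ^ 3) * X 1 u - 3 * k u * K 1 u * Y 1 u
        from funext E4y]
      exact (((hKd 2 t).sub ((hkd t).pow 3)).mul (hXd 1 t)).sub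
        ((((hkd t).const_mul (3:ℝ)).mul (hKd 1 t)).mul (hYd 1 t))
    have h := (hYd 4 t).unique hd
    rw [E2x t, E2y t] at h
    rw [h]; push_cast; ring
  have E6x : ∀ t, X 6 t =
      (10 * k t ^ 3 * K 1 t - 10 * K 1 t * K 2 t - 5 * k t * K 3 t) * X 1 t -
        (k t ^ 5 + K 4 t - 15 * k t * K 1 t ^ 2 - 10 * k t ^ 2 * K 2 t) * Y 1 t := by
    intro t
    have hd : HasDerivAt (X 5)
        (((((4 : ℕ) * k t ^ (4 - 1) * K 1 t -
            (3 * ((2 : ℕ) * K 1 t ^ (2 - 1) * K 2 t))) -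
            ((4 * K 1 t) * K 2 t + (4 * k t) * K 3 t)) * X 1 t +
          (k t ^ 4 - 3 * K 1 t ^ 2 - 4 * k t * K 2 t) * X 2 t) -
          ((K 4 t - ((6 * ((2 : ℕ) * k t ^ (2 - 1) * K 1 t)) * K 1 t +
            (6 * k t ^ 2) * K 2 t)) * Y 1 t +
          (K 3 t - 6 * k t ^ 2 * K 1 t) * Y 2 t)) t := by
      rw [show X 5 = fun u => (k u ^ 4 - 3 * K 1 u ^ 2 - 4 * k u * K 2 u) * X 1 u -
          (K 3 u - 6 * k u ^ 2 * K 1 u) * Y 1 u from funext E5x]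
      exact (((((hkd t).pow 4).sub (((hKd 1 t).pow 2).const_mul (3:ℝ))).sub
          (((hkd t).const_mul (4:ℝ)).mul (hKd 2 t))).mul (hXd 1 t)).sub
        (((hKd 3 t).sub ((((hkd t).pow 2).const_mul (6:ℝ)).mul (hKd 1 t))).mul (hYd 1 t))
    have h := (hXd 5 t).unique hd
    rw [E2x t, E2y t] at h
    rw [h]; push_cast; ring
  have E6y : ∀ t, Y 6 t =
      (k t ^ 5 + K 4 t - 15 * k t * K 1 t ^ 2 - 10 * k t ^ 2 * K 2 t) * X 1 t +
        (10 * k t ^ 3 * K 1 t - 10 * K 1 t * K 2 t - 5 * k t * K 3 t) * Y 1 t := by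
    intro t
    have hd : HasDerivAt (Y 5)
        (((K 4 t - ((6 * ((2 : ℕ) * k t ^ (2 - 1) * K 1 t)) * K 1 t +
            (6 * k t ^ 2) * K 2 t)) * X 1 t +
          (K 3 t - 6 * k t ^ 2 * K 1 t) * X 2 t) +
          ((((4 : ℕ) * k t ^ (4 - 1) * K 1 t -
            (3 * ((2 : ℕ) * K 1 t ^ (2 - 1) * K 2 t))) -
            ((4 * K 1 t) * K 2 t + (4 * k t) * K 3 t)) * Y 1 t +
          (k t ^ 4 - 3 * K 1 t ^ 2 - 4 * k t * K 2 t) * Y 2 t)) t := by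
      rw [show Y 5 = fun u => (K 3 u - 6 * k u ^ 2 * K 1 u) * X 1 u +
          (k u ^ 4 - 3 * K 1 u ^ 2 - 4 * k u * K 2 u) * Y 1 u from funext E5y]
      exact ((((hKd 3 t).sub ((((hkd t).pow 2).const_mul (6:ℝ)).mul (hKd 1 t))).mul
          (hXd 1 t))).add
        (((((hkd t).pow 4).sub (((hKd 1 t).pow 2).const_mul (3:ℝ))).sub
          (((hkd t).const_mul (4:ℝ)).mul (hKd 2 t))).mul (hYd 1 t))
    have h := (hYd 5 t).unique hd
    rw [E2x t, E2y t] at h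
    rw [h]; push_cast; ring
  -- periodicity and bounds for 7th derivatives
  have hpx : Function.Periodic (fun t => (γ t).1) ℓ := fun t => by simp [hper t]
  have hpy : Function.Periodic (fun t => (γ t).2) ℓ := fun t => by simp [hper t]
  have hXper : ∀ n, Function.Periodic (X n) ℓ := by
    intro n
    simp only [hX]
    induction n with
    | zero => simpa [iteratedDeriv_zero] using hpx
    | succ n ih => rw [iteratedDeriv_succ]; exact periodic_deriv' ih
  have hYper : ∀ n, Function.Periodic (Y n) ℓ := by
    intro n
    simp only [hY]
    induction n with
    | zero => simpa [iteratedDeriv_zero] using hpy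
    | succ n ih => rw [iteratedDeriv_succ]; exact periodic_deriv' ih
  obtain ⟨Mx, hMx0, hMx⟩ := periodic_bound hℓ (hXper 7) (hXsm 7).continuous
  obtain ⟨My, hMy0, hMy⟩ := periodic_bound hℓ (hYper 7) (hYsm 7).continuous
  -- the constant
  refine ⟨1, one_pos, (Mx + My) / 120 + 1, by positivity, fun r s hrs0 _ => ?_⟩
  have hrlt : r < s := by linarith
  have hu : UniqueDiffOn ℝ (Icc r s) := uniqueDiffOn_Icc hrlt
  obtain ⟨F, hF⟩ : ∃ F : ℝ → ℝ, F = fun t => X 1 r * Y 1 t - Y 1 r * X 1 t := ⟨_, rfl⟩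
  have hFC : ContDiff ℝ (⊤ : ℕ∞) F := by
    rw [hF]
    exact (contDiff_const.mul (hYsm 1)).sub (contDiff_const.mul (hXsm 1))
  have hFj : ∀ (j : ℕ) (t : ℝ),
      iteratedDeriv j F t = X 1 r * Y (j + 1) t - Y 1 r * X (j + 1) t := by
    intro j
    induction j with
    | zero => intro t; rw [iteratedDeriv_zero, hF]
    | succ j ih =>
        intro t
        have hd : HasDerivAt (iteratedDeriv j F)
            (X 1 r * Y (j + 1 + 1) t - Y 1 r * X (j + 1 + 1) t) t := by
          rw [funext ih]
          exact ((hYd (j + 1) t).const_mul (X 1 r)).sub ((hXd (j + 1) t).const_mul (Y 1 r))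
        exact (hasDerivAt_iteratedDeriv hFC j t).unique hd
  have hx1le : |X 1 r| ≤ 1 := by
    have h := hunit' r
    rw [abs_le]
    constructor <;> nlinarith [sq_nonneg (Y 1 r)]
  have hy1le : |Y 1 r| ≤ 1 := by
    have h := hunit' r
    rw [abs_le]
    constructor <;> nlinarith [sq_nonneg (X 1 r)]
  have hiW : ∀ (j : ℕ), ∀ t ∈ Icc r s, iteratedDerivWithin j F (Icc r s) t = iteratedDeriv j F t :=
    fun j => iteratedDerivWithin_eq_iteratedDeriv' hFC hu j
  have hFC6 : ContDiffOn ℝ ((5 : ℕ) + 1) F (Icc r s) :=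
    (hFC.of_le (ENat.natCast_le_of_coe_top_le_withTop le_rfl _)).contDiffOn
  have hsmem : s ∈ Icc r s := ⟨hrlt.le, le_rfl⟩
  have hrmem : r ∈ Icc r s := ⟨le_rfl, hrlt.le⟩
  have hbound : ∀ t ∈ Icc r s,
      ‖iteratedDerivWithin ((5 : ℕ) + 1) F (Icc r s) t‖ ≤ Mx + My := by
    intro t ht
    rw [Real.norm_eq_abs, hiW 6 t ht, hFj 6 t]
    have h1 : |X 1 r * Y 7 t| ≤ My := by
      rw [abs_mul]
      calc |X 1 r| * |Y 7 t| ≤ 1 * My :=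
            mul_le_mul hx1le (hMy t) (abs_nonneg _) zero_le_one
        _ = My := one_mul _
    have h2 : |Y 1 r * X 7 t| ≤ Mx := by
      rw [abs_mul]
      calc |Y 1 r| * |X 7 t| ≤ 1 * Mx :=
            mul_le_mul hy1le (hMx t) (abs_nonneg _) zero_le_one
        _ = Mx := one_mul _
    calc |X 1 r * Y (6 + 1) t - Y 1 r * X (6 + 1) t|
        ≤ |X 1 r * Y (6 + 1) t| + |Y 1 r * X (6 + 1) t| := abs_sub _ _
      _ ≤ My + Mx := add_le_add h1 h2
      _ = Mx + My := by ring
  have htaylor := taylor_mean_remainder_bound (n := 5) hrlt.le hFC6 hsmem hbound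
  -- identify the Taylor polynomial with the target polynomial
  have hK1 : deriv k = K 1 := by rw [hK]; exact iteratedDeriv_one.symm
  have hT : taylorWithinEval F 5 (Icc r s) r s =
      (k r * (s - r) + deriv k r / 2 * (s - r) ^ 2 +
        (iteratedDeriv 2 k r - (k r) ^ 3) / 6 * (s - r) ^ 3 +
        (iteratedDeriv 3 k r - 6 * (k r) ^ 2 * deriv k r) / 24 * (s - r) ^ 4 +
        ((k r) ^ 5 - 10 * (k r) ^ 2 * iteratedDeriv 2 k r - 15 * k r * (deriv k r) ^ 2 +
          iteratedDeriv 4 k r) / 120 * (s - r) ^ 5) := by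
    rw [taylor_within_apply]
    have e0 := hiW 0 r hrmem
    have e1 := hiW 1 r hrmem
    have e2 := hiW 2 r hrmem
    have e3 := hiW 3 r hrmem
    have e4 := hiW 4 r hrmem
    have e5 := hiW 5 r hrmem
    simp only [Finset.sum_range_succ, Finset.sum_range_zero, smul_eq_mul, zero_add,
      e0, e1, e2, e3, e4, e5, hFj]
    rw [hK1, show iteratedDeriv 2 k = K 2 from by rw [hK],
      show iteratedDeriv 3 k = K 3 from by rw [hK],
      show iteratedDeriv 4 k = K 4 from by rw [hK]]
    rw [E2x r, E2y r, E3x r, E3y r, E4x r, E4y r, E5x r, E5y r, E6x r, E6y r]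
    norm_num [Nat.factorial]
    linear_combination (k r * (s - r) + K 1 r / 2 * (s - r) ^ 2 +
      (K 2 r - (k r) ^ 3) / 6 * (s - r) ^ 3 +
      (K 3 r - 6 * (k r) ^ 2 * K 1 r) / 24 * (s - r) ^ 4 +
      ((k r) ^ 5 - 10 * (k r) ^ 2 * K 2 r - 15 * k r * (K 1 r) ^ 2 +
        K 4 r) / 120 * (s - r) ^ 5) * hunit' r
  have hw : wedge (deriv γ r) (deriv γ s) = F s := by
    rw [hdγ r, hdγ s, hF]
    simp [wedge]
  rw [hw, ← hT]
  rw [Real.norm_eq_abs] at htaylor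
  refine le_trans htaylor ?_
  have hp : (0 : ℝ) ≤ (s - r) ^ 6 := by positivity
  have hfac : ((Nat.factorial 5 : ℕ) : ℝ) = 120 := by norm_num [Nat.factorial]
  rw [show (5 : ℕ) + 1 = 6 from rfl, hfac]
  nlinarith [hp]
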